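/- Let K be a field, G a small groupoid, and a a separability family for the K-linearization K[G]. Fix objects x, y and write a x y = Σ_{g ∈ Hom_G(y,x), h ∈ Hom_G(x,y)} α_{g,h} · g ⊗ h in the standard basis {g ⊗ h} of Hom_{K[G]}(y,x) ⊗[K] Hom_{K[G]}(x,y). Then the coefficient α_{u,u^{-1}} does not depend on u: for all u, v ∈ Hom_G(y,x), α_{u,u^{-1}} = α_{v,v^{-1}}. -/

import Mathlib

open CategoryTheory TensorProduct

/-- Composition as a `K`-linear map out of the tensor product of Hom spaces:
`h ⊗ k ↦ h ∘ k = k ≫ h`. -/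
noncomputable def compMap (K : Type*) [Field K] {C : Type*} [Category C] [Preadditive C]
    [Linear K C] (X Y Z : C) : ((Z ⟶ X) ⊗[K] (Y ⟶ Z)) →ₗ[K] (Y ⟶ X) :=
  TensorProduct.lift (LinearMap.mk₂ K (fun (h : Z ⟶ X) (k : Y ⟶ Z) => k ≫ h)
    (fun h h' k => by simp) (fun r h k => by simp)
    (fun h k k' => by simp) (fun r h k => by simp))

/-- A separability family for a `K`-linear category `C`. -/
structure SeparabilityFamily (K : Type*) [Field K] (C : Type*) [Category C] [Preadditive C]
    [Linear K C] where
  a : ∀ x y : C, (y ⟶ x) ⊗[K] (x ⟶ y)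
  finite_support : ∀ x : C, {y : C | a x y ≠ 0}.Finite
  sum_comp : ∀ x : C, (∑ᶠ y : C, compMap K x x y (a x y)) = 𝟙 x
  compat : ∀ {x z : C} (f : x ⟶ z) (y : C),
    LinearMap.rTensor (x ⟶ y) (Linear.rightComp K y f) (a x y)
      = LinearMap.lTensor (y ⟶ z) (Linear.leftComp K y f) (a z y)

/-- The coefficient `α_{g,h}` of `g ⊗ h` in an element of
`Hom_{K[G]}(y,x) ⊗[K] Hom_{K[G]}(x,y)`, with respect to the standard basis. -/
noncomputable def coeff (K : Type*) [Field K] {G : Type*} [Groupoid G] {x y : G}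
    (t : (Free.of K y ⟶ Free.of K x) ⊗[K] (Free.of K x ⟶ Free.of K y))
    (g : y ⟶ x) (h : x ⟶ y) : K :=
  TensorProduct.lid K K
    (TensorProduct.map (Finsupp.lapply g) (Finsupp.lapply h) t)

lemma lapply_comp_rightComp (K : Type*) [Field K] {G : Type*} [Groupoid G]
    {x y : G} (w : y ⟶ x) :
    (Finsupp.lapply w : (Free.of K y ⟶ Free.of K x) →ₗ[K] K).comp
      (Linear.rightComp K (Free.of K y)
        (Finsupp.single w 1 : Free.of K y ⟶ Free.of K x))
      = (Finsupp.lapply (𝟙 y) : (Free.of K y ⟶ Free.of K y) →ₗ[K] K) := by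
  classical
  apply Finsupp.lhom_ext
  intro (g : y ⟶ y) r
  have hc : (Linear.rightComp K (Free.of K y)
      (Finsupp.single w 1 : Free.of K y ⟶ Free.of K x)) (Finsupp.single g r)
      = Finsupp.single (g ≫ w) r := by
    show (Finsupp.single g r ≫ Finsupp.single w 1 : Free.of K y ⟶ Free.of K x) = _
    rw [Free.single_comp_single, mul_one]
  have hgw : ∀ g' : y ⟶ y, (g' ≫ w = w) ↔ (g' = 𝟙 y) := by
    intro g'
    constructor
    · intro h
      have h' : g' ≫ w = 𝟙 y ≫ w := by rw [h, Category.id_comp]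
      exact (cancel_mono w).mp h'
    · rintro rfl; exact Category.id_comp w
  erw [LinearMap.comp_apply, hc]
  erw [Finsupp.lapply_apply, Finsupp.lapply_apply,
    Finsupp.single_apply, Finsupp.single_apply]
  split_ifs with h1 h2 h2 <;> first | rfl | exact absurd ((hgw g).mp h1) h2 | exact absurd ((hgw g).mpr h2) h1

lemma lapply_id_comp_leftComp (K : Type*) [Field K] {G : Type*} [Groupoid G]
    {x y : G} (w : y ⟶ x) :
    (Finsupp.lapply (𝟙 y) : (Free.of K y ⟶ Free.of K y) →ₗ[K] K).comp
      (Linear.leftComp K (Free.of K y)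
        (Finsupp.single w 1 : Free.of K y ⟶ Free.of K x))
      = (Finsupp.lapply (Groupoid.inv w) : (Free.of K x ⟶ Free.of K y) →ₗ[K] K) := by
  classical
  apply Finsupp.lhom_ext
  intro (h : x ⟶ y) r
  have hc : (Linear.leftComp K (Free.of K y)
      (Finsupp.single w 1 : Free.of K y ⟶ Free.of K x)) (Finsupp.single h r)
      = Finsupp.single (w ≫ h) r := by
    show (Finsupp.single w 1 ≫ Finsupp.single h r : Free.of K y ⟶ Free.of K y) = _
    rw [Free.single_comp_single, one_mul]
  have hwh : (w ≫ h = 𝟙 y) ↔ (h = Groupoid.inv w) := by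
    constructor
    · intro hh
      have h' : w ≫ h = w ≫ Groupoid.inv w := by rw [hh, Groupoid.comp_inv]
      exact (cancel_epi w).mp h'
    · rintro rfl; exact Groupoid.comp_inv w
  erw [LinearMap.comp_apply, hc]
  erw [Finsupp.lapply_apply, Finsupp.lapply_apply,
    Finsupp.single_apply, Finsupp.single_apply]
  split_ifs with h1 h2 h2 <;> first | rfl | exact absurd (hwh.mp h1) h2 | exact absurd (hwh.mpr h2) h1 | exact absurd (hwh.mp h1).symm h2 | exact absurd (hwh.mpr h2.symm) h1

lemma coeff_inv_eq_id (K : Type*) [Field K] {G : Type*} [Groupoid G]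
    (s : SeparabilityFamily K (Free K G)) (x y : G) (w : y ⟶ x) :
    coeff K (s.a (Free.of K x) (Free.of K y)) w (Groupoid.inv w)
      = coeff K (s.a (Free.of K y) (Free.of K y)) (𝟙 y) (𝟙 y) := by
  have hc := s.compat (Finsupp.single w 1 : Free.of K y ⟶ Free.of K x) (Free.of K y)
  set f := (Finsupp.single w 1 : Free.of K y ⟶ Free.of K x) with hf
  set F := TensorProduct.map
      (Finsupp.lapply w : (Free.of K y ⟶ Free.of K x) →ₗ[K] K)
      (Finsupp.lapply (𝟙 y) : (Free.of K y ⟶ Free.of K y) →ₗ[K] K) with hF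
  have e1 : F.comp (LinearMap.rTensor (Free.of K y ⟶ Free.of K y)
      (Linear.rightComp K (Free.of K y) f))
      = TensorProduct.map
        (Finsupp.lapply (𝟙 y) : (Free.of K y ⟶ Free.of K y) →ₗ[K] K)
        (Finsupp.lapply (𝟙 y) : (Free.of K y ⟶ Free.of K y) →ₗ[K] K) := by
    erw [LinearMap.map_comp_rTensor]; rw [lapply_comp_rightComp]
  have e2 : F.comp (LinearMap.lTensor (Free.of K y ⟶ Free.of K x)
      (Linear.leftComp K (Free.of K y) f))
      = TensorProduct.map
        (Finsupp.lapply w : (Free.of K y ⟶ Free.of K x) →ₗ[K] K)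
        (Finsupp.lapply (Groupoid.inv w) : (Free.of K x ⟶ Free.of K y) →ₗ[K] K) := by
    erw [LinearMap.map_comp_lTensor]; rw [lapply_id_comp_leftComp]
  calc coeff K (s.a (Free.of K x) (Free.of K y)) w (Groupoid.inv w)
      = TensorProduct.lid K K (F.comp (LinearMap.lTensor (Free.of K y ⟶ Free.of K x)
          (Linear.leftComp K (Free.of K y) f)) (s.a (Free.of K x) (Free.of K y))) := by
        rw [e2]; rfl
    _ = TensorProduct.lid K K (F ((LinearMap.lTensor (Free.of K y ⟶ Free.of K x)
          (Linear.leftComp K (Free.of K y) f)) (s.a (Free.of K x) (Free.of K y)))) := rfl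
    _ = TensorProduct.lid K K (F ((LinearMap.rTensor (Free.of K y ⟶ Free.of K y)
          (Linear.rightComp K (Free.of K y) f)) (s.a (Free.of K y) (Free.of K y)))) := by
        rw [hc]
    _ = TensorProduct.lid K K (F.comp (LinearMap.rTensor (Free.of K y ⟶ Free.of K y)
          (Linear.rightComp K (Free.of K y) f)) (s.a (Free.of K y) (Free.of K y))) := rfl
    _ = coeff K (s.a (Free.of K y) (Free.of K y)) (𝟙 y) (𝟙 y) := by
        rw [e1]; rfl

/-- For a separability family on `K[G]`, the coefficient `α_{u,u⁻¹}` of `a x y` does not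
depend on `u ∈ Hom_G(y,x)`. -/
theorem sepFamily_coeff_inv_independent (K : Type*) [Field K]
    (G : Type*) [Groupoid G] (s : SeparabilityFamily K (Free K G))
    (x y : G) (u v : y ⟶ x) :
    coeff K (s.a (Free.of K x) (Free.of K y)) u (Groupoid.inv u) =
      coeff K (s.a (Free.of K x) (Free.of K y)) v (Groupoid.inv v) := by
  rw [coeff_inv_eq_id K s x y u, coeff_inv_eq_id K s x y v]
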